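/- Let F : ℝ^D → ℝ be differentiable with M-Lipschitz gradient, let x ∈ ℝ^D be fixed, and let s be a random vector in ℝ^D satisfying E[s] = −θ∇F(x) and E[‖s‖₂²] ≤ (θ²/p)·‖∇F(x)‖₂² + c, where θ ∈ (0,1], p ∈ (0,1], and c ≥ 0. Then E[F(x + s)] ≤ F(x) − (θ − Mθ²/(2p))·‖∇F(x)‖₂² + Mc/2. In particular, if 2pθ − Mθ² > 0 (i.e., θ < 2p/M), then (2pθ − Mθ²)·‖∇F(x)‖₂² ≤ 2p·(F(x) − E[F(x + s)]) + M·p·c. -/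

import Mathlib

open MeasureTheory


lemma descent_aux {D : ℕ} (F : EuclideanSpace ℝ (Fin D) → ℝ)
    (M : ℝ) (hM : 0 ≤ M)
    (hF : Differentiable ℝ F) (hLip : LipschitzWith M.toNNReal (gradient F))
    (x v : EuclideanSpace ℝ (Fin D)) :
    F (x + v) ≤ F x + (inner ℝ (gradient F x) v : ℝ) + M / 2 * ‖v‖ ^ 2 := by
  set G : ℝ := (inner ℝ (gradient F x) v : ℝ) with hG
  have key : ∀ t : ℝ, HasDerivAt (fun t : ℝ => F (x + t • v))
      ((inner ℝ (gradient F (x + t • v)) v : ℝ)) t := by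
    intro t
    have hline : HasDerivAt (fun t : ℝ => x + t • v) v t := by
      simpa using ((hasDerivAt_id t).smul_const v).const_add x
    have hFd : HasFDerivAt F (fderiv ℝ F (x + t • v)) (x + t • v) :=
      (hF _).hasFDerivAt
    have := hFd.comp_hasDerivAt t hline
    have heq : fderiv ℝ F (x + t • v) v = (inner ℝ (gradient F (x + t • v)) v : ℝ) := by
      rw [gradient, InnerProductSpace.toDual_symm_apply]
    rwa [heq] at this
  set g : ℝ → ℝ := fun t => F (x + t • v) - t * G - M / 2 * ‖v‖ ^ 2 * t ^ 2 with hg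
  have hg' : ∀ t : ℝ, HasDerivAt g
      ((inner ℝ (gradient F (x + t • v)) v : ℝ) - G - M * ‖v‖ ^ 2 * t) t := by
    intro t
    have h2 : HasDerivAt (fun t : ℝ => t * G) G t := by
      simpa using (hasDerivAt_id t).mul_const G
    have h3 : HasDerivAt (fun t : ℝ => M / 2 * ‖v‖ ^ 2 * t ^ 2) (M / 2 * ‖v‖ ^ 2 * (2 * t)) t := by
      simpa using (hasDerivAt_pow 2 t).const_mul (M / 2 * ‖v‖ ^ 2)
    have := ((key t).sub h2).sub h3
    exact this.congr_deriv (by ring)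
  have hanti : AntitoneOn g (Set.Icc 0 1) := by
    apply antitoneOn_of_deriv_nonpos (convex_Icc 0 1)
    · have : Differentiable ℝ g := fun t => (hg' t).differentiableAt
      exact this.continuous.continuousOn
    · intro t ht
      exact ((hg' t).differentiableAt).differentiableWithinAt
    · intro t ht
      rw [interior_Icc] at ht
      rw [(hg' t).deriv]
      have hlip : ‖gradient F (x + t • v) - gradient F x‖ ≤ M * ‖t • v‖ := by
        have := hLip.dist_le_mul (x + t • v) x
        simpa [dist_eq_norm, Real.coe_toNNReal M hM, add_sub_cancel_left] using this
      have hinner : (inner ℝ (gradient F (x + t • v)) v : ℝ) - G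
          ≤ M * (t * ‖v‖) * ‖v‖ := by
        rw [hG, ← inner_sub_left]
        calc (inner ℝ (gradient F (x + t • v) - gradient F x) v : ℝ)
            ≤ ‖gradient F (x + t • v) - gradient F x‖ * ‖v‖ := real_inner_le_norm _ _
          _ ≤ M * ‖t • v‖ * ‖v‖ := by
              apply mul_le_mul_of_nonneg_right hlip (norm_nonneg _)
          _ = M * (|t| * ‖v‖) * ‖v‖ := by rw [norm_smul]; norm_num
          _ = M * (t * ‖v‖) * ‖v‖ := by rw [abs_of_nonneg ht.1.le]
      nlinarith [norm_nonneg v]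
  have h01 := hanti (Set.mem_Icc.mpr ⟨le_rfl, zero_le_one⟩)
      (Set.mem_Icc.mpr ⟨zero_le_one, le_rfl⟩) zero_le_one
  simp only [hg, zero_smul, one_smul, add_zero] at h01
  nlinarith [h01]

/-- one-step descent inequality.  If `F` has `M`-Lipschitz gradient and the
random step `s` satisfies `E[s] = −θ∇F(x)` and `E‖s‖² ≤ (θ²/p)‖∇F(x)‖² + c`, then
`E[F(x+s)] ≤ F(x) − (θ − Mθ²/(2p))‖∇F(x)‖² + Mc/2`; in particular, if `2pθ − Mθ² > 0`,
then `(2pθ − Mθ²)‖∇F(x)‖² ≤ 2p(F(x) − E[F(x+s)]) + Mpc`. -/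
theorem sdm_dsgd_descent_step {D : ℕ} (F : EuclideanSpace ℝ (Fin D) → ℝ)
    (M : ℝ) (hM : 0 ≤ M)
    (hF : Differentiable ℝ F) (hLip : LipschitzWith M.toNNReal (gradient F))
    (x : EuclideanSpace ℝ (Fin D))
    {Ω : Type} [MeasurableSpace Ω] (μ : Measure Ω) [IsProbabilityMeasure μ]
    (s : Ω → EuclideanSpace ℝ (Fin D))
    (θ p c : ℝ) (hθ : θ ∈ Set.Ioc (0 : ℝ) 1) (hp : p ∈ Set.Ioc (0 : ℝ) 1) (hc : 0 ≤ c)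
    (hs_int : Integrable s μ) (hs_sq : Integrable (fun ω => ‖s ω‖ ^ 2) μ)
    (hmean : ∫ ω, s ω ∂μ = -θ • gradient F x)
    (hsec : ∫ ω, ‖s ω‖ ^ 2 ∂μ ≤ θ ^ 2 / p * ‖gradient F x‖ ^ 2 + c) :
    (∫ ω, F (x + s ω) ∂μ
        ≤ F x - (θ - M * θ ^ 2 / (2 * p)) * ‖gradient F x‖ ^ 2 + M * c / 2) ∧
    (0 < 2 * p * θ - M * θ ^ 2 →
      (2 * p * θ - M * θ ^ 2) * ‖gradient F x‖ ^ 2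
        ≤ 2 * p * (F x - ∫ ω, F (x + s ω) ∂μ) + M * p * c) := by
  obtain ⟨hθ0, hθ1⟩ := hθ
  obtain ⟨hp0, hp1⟩ := hp
  set G : EuclideanSpace ℝ (Fin D) := gradient F x with hGdef
  -- pointwise descent bound
  have hpt : ∀ ω, F (x + s ω) ≤ F x + (inner ℝ G (s ω) : ℝ) + M / 2 * ‖s ω‖ ^ 2 :=
    fun ω => descent_aux F M hM hF hLip x (s ω)
  have hpt' : ∀ ω, F x + (inner ℝ G (s ω) : ℝ) - 3 * M / 2 * ‖s ω‖ ^ 2 ≤ F (x + s ω) := by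
    intro ω
    have h := descent_aux F M hM hF hLip (x + s ω) (-(s ω))
    have h2 : ‖gradient F (x + s ω) - G‖ ≤ M * ‖s ω‖ := by
      have := hLip.dist_le_mul (x + s ω) x
      simpa [dist_eq_norm, Real.coe_toNNReal M hM, add_sub_cancel_left] using this
    have h4 : (inner ℝ (gradient F (x + s ω) - G) (-(s ω)) : ℝ)
        ≤ M * ‖s ω‖ * ‖s ω‖ := by
      calc (inner ℝ (gradient F (x + s ω) - G) (-(s ω)) : ℝ)
          ≤ ‖gradient F (x + s ω) - G‖ * ‖-(s ω)‖ := real_inner_le_norm _ _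
        _ ≤ M * ‖s ω‖ * ‖s ω‖ := by
            rw [norm_neg]
            exact mul_le_mul_of_nonneg_right h2 (norm_nonneg _)
    rw [inner_sub_left, inner_neg_right, inner_neg_right] at h4
    simp only [add_neg_cancel_right, norm_neg] at h
    rw [inner_neg_right] at h
    have hsq : ‖s ω‖ ^ 2 = ‖s ω‖ * ‖s ω‖ := sq ‖s ω‖
    linarith [h, h4]
  -- integrability
  have hinner_int : Integrable (fun ω => (inner ℝ G (s ω) : ℝ)) μ := by
    have : Integrable (fun ω => ‖G‖ * ‖s ω‖) μ := (hs_int.norm.const_mul ‖G‖)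
    refine this.mono' ?_ ?_
    · exact (continuous_const.inner continuous_id).comp_aestronglyMeasurable
        hs_int.aestronglyMeasurable
    · filter_upwards with ω
      simpa using abs_real_inner_le_norm G (s ω)
  have hFmeas : AEStronglyMeasurable (fun ω => F (x + s ω)) μ :=
    (hF.continuous.comp (continuous_const.add continuous_id)).comp_aestronglyMeasurable
      hs_int.aestronglyMeasurable
  have hbound : Integrable (fun ω => |F x| + ‖G‖ * ‖s ω‖ + 2 * M * ‖s ω‖ ^ 2) μ :=
    ((integrable_const _).add (hs_int.norm.const_mul ‖G‖)).add (hs_sq.const_mul (2 * M))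
  have hFint : Integrable (fun ω => F (x + s ω)) μ := by
    refine hbound.mono' hFmeas ?_
    filter_upwards with ω
    have h1 := hpt ω
    have h2 := hpt' ω
    have h3 : |(inner ℝ G (s ω) : ℝ)| ≤ ‖G‖ * ‖s ω‖ := abs_real_inner_le_norm G (s ω)
    rw [abs_le] at h3
    have hfx1 := le_abs_self (F x)
    have hfx2 := neg_abs_le (F x)
    have hMs : 0 ≤ M / 2 * ‖s ω‖ ^ 2 :=
      mul_nonneg (by linarith) (sq_nonneg _)
    rw [Real.norm_eq_abs, abs_le]
    constructor <;> nlinarith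
  -- the main integral inequality
  have hmono : ∫ ω, F (x + s ω) ∂μ
      ≤ ∫ ω, (F x + (inner ℝ G (s ω) : ℝ) + M / 2 * ‖s ω‖ ^ 2) ∂μ := by
    refine integral_mono hFint ?_ hpt
    exact ((integrable_const _).add hinner_int).add (hs_sq.const_mul (M / 2))
  have hsum : ∫ ω, (F x + (inner ℝ G (s ω) : ℝ) + M / 2 * ‖s ω‖ ^ 2) ∂μ
      = F x + (inner ℝ G (∫ ω, s ω ∂μ) : ℝ) + M / 2 * ∫ ω, ‖s ω‖ ^ 2 ∂μ := by
    have e1 : ∫ ω, (F x + (inner ℝ G (s ω) : ℝ) + M / 2 * ‖s ω‖ ^ 2) ∂μ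
        = (∫ ω, (F x + (inner ℝ G (s ω) : ℝ)) ∂μ) + ∫ ω, M / 2 * ‖s ω‖ ^ 2 ∂μ :=
      integral_add ((integrable_const _).add hinner_int) (hs_sq.const_mul (M / 2))
    have e2 : ∫ ω, (F x + (inner ℝ G (s ω) : ℝ)) ∂μ
        = (∫ _ω, F x ∂μ) + ∫ ω, (inner ℝ G (s ω) : ℝ) ∂μ :=
      integral_add (integrable_const _) hinner_int
    have e3 : ∫ ω, (inner ℝ G (s ω) : ℝ) ∂μ = (inner ℝ G (∫ ω, s ω ∂μ) : ℝ) :=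
      integral_inner hs_int G
    have e4 : ∫ ω, M / 2 * ‖s ω‖ ^ 2 ∂μ = M / 2 * ∫ ω, ‖s ω‖ ^ 2 ∂μ :=
      integral_const_mul _ _
    rw [e1, e2, e3, e4, integral_const]
    simp
  have hinnerval : (inner ℝ G (∫ ω, s ω ∂μ) : ℝ) = -θ * ‖G‖ ^ 2 := by
    rw [hmean, real_inner_smul_right, real_inner_self_eq_norm_sq]
    try ring
  have hg2 : (0:ℝ) ≤ ‖G‖ ^ 2 := sq_nonneg _
  have main : ∫ ω, F (x + s ω) ∂μ
      ≤ F x - (θ - M * θ ^ 2 / (2 * p)) * ‖G‖ ^ 2 + M * c / 2 := by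
    rw [hsum, hinnerval] at hmono
    have h5 : M / 2 * ∫ ω, ‖s ω‖ ^ 2 ∂μ ≤ M / 2 * (θ ^ 2 / p * ‖G‖ ^ 2 + c) :=
      mul_le_mul_of_nonneg_left hsec (by linarith)
    have hpne : p ≠ 0 := ne_of_gt hp0
    calc ∫ ω, F (x + s ω) ∂μ ≤ F x + -θ * ‖G‖ ^ 2 + M / 2 * ∫ ω, ‖s ω‖ ^ 2 ∂μ := hmono
      _ ≤ F x + -θ * ‖G‖ ^ 2 + M / 2 * (θ ^ 2 / p * ‖G‖ ^ 2 + c) := by linarith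
      _ = F x - (θ - M * θ ^ 2 / (2 * p)) * ‖G‖ ^ 2 + M * c / 2 := by
          field_simp
          try ring
  refine ⟨main, fun hpos => ?_⟩
  have h2p : (0:ℝ) ≤ 2 * p := by linarith
  have key := mul_le_mul_of_nonneg_left main h2p
  have hdiv2 : 2 * p * (M * θ ^ 2 / (2 * p)) * ‖G‖ ^ 2 = M * θ ^ 2 * ‖G‖ ^ 2 := by
    field_simp
  nlinarith [key, hdiv2]
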